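/- For the sequence M_n = n!/(n+1)^2, there exists a constant C > 0 (depending only on the dimension d) such that for every multi-index α ∈ ℕ^d, the sum over all multi-indices β < α of binom(α,β) · M_{|α−β|} · M_{|β|+1} is at most C · |α| · M_{|α|}. -/

import Mathlib

open Finset Polynomial

/-- `M n = n!/(n+1)^2`. -/
noncomputable def Mseq (n : ℕ) : ℝ := (n.factorial : ℝ) / ((n : ℝ) + 1) ^ 2

lemma Mseq_nonneg (n : ℕ) : 0 ≤ Mseq n := by unfold Mseq; positivity

lemma vand (d : ℕ) (α : Fin d → ℕ) (k : ℕ) :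
    ∑ β ∈ (Fintype.piFinset fun i => Finset.range (α i + 1)) with (∑ i, β i = k),
      ∏ i, (α i).choose (β i) = (∑ i, α i).choose k := by
  have expand : ∀ a : ℕ, (X + 1 : Polynomial ℕ) ^ a
      = ∑ b ∈ Finset.range (a + 1), C (a.choose b) * X ^ b := by
    intro a
    rw [add_pow]
    refine Finset.sum_congr rfl fun b _ => ?_
    rw [one_pow, mul_one]
    simp [mul_comm, Polynomial.C_eq_natCast]
  have h1 : ((X + 1 : Polynomial ℕ) ^ (∑ i, α i))
      = ∑ β ∈ Fintype.piFinset (fun i => Finset.range (α i + 1)),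
          C (∏ i, (α i).choose (β i)) * X ^ (∑ i, β i) := by
    rw [← Finset.prod_pow_eq_pow_sum]
    have : (∏ i, (X + 1 : Polynomial ℕ) ^ (α i))
        = ∏ i, ∑ b ∈ Finset.range (α i + 1), C ((α i).choose b) * X ^ b :=
      Finset.prod_congr rfl fun i _ => expand (α i)
    rw [this, Finset.prod_univ_sum]
    refine Finset.sum_congr rfl fun β _ => ?_
    rw [Finset.prod_mul_distrib, Finset.prod_pow_eq_pow_sum, ← map_prod]
  have h2 := congrArg (fun p : Polynomial ℕ => p.coeff k) h1
  simp only [Polynomial.coeff_X_add_one_pow, Nat.cast_id, Polynomial.finset_sum_coeff,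
    Polynomial.C_mul_X_pow_eq_monomial, Polynomial.coeff_monomial] at h2
  rw [Finset.sum_filter, ← h2]

lemma keybound (n : ℕ) :
    ∑ k ∈ Finset.range n, (n.choose k : ℝ) * (Mseq (n - k) * Mseq (k + 1))
      ≤ 4 * n * Mseq n := by
  set F : ℕ → ℝ := fun i => 1/(((n-i:ℕ):ℝ)+1) with hF
  have hstep : ∀ k ∈ Finset.range n,
      (n.choose k : ℝ) * (Mseq (n - k) * Mseq (k + 1))
        ≤ 2 * n.factorial / ((n:ℝ) + 3)^2 *
            (((k:ℝ)+1)/(((n-k:ℕ):ℝ)+1)^2 + ((k:ℝ)+1)/((k:ℝ)+2)^2) := by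
    intro k hk
    have hkn : k < n := Finset.mem_range.mp hk
    have hkn' : k ≤ n := hkn.le
    set a : ℝ := ((n-k:ℕ):ℝ)+1 with ha
    set b : ℝ := (k:ℝ)+2 with hb
    have hae : a = (n:ℝ) - k + 1 := by rw [ha, Nat.cast_sub hkn']
    have hab : a + b = (n:ℝ) + 3 := by rw [hae, hb]; ring
    have hapos : 0 < a := by positivity
    have hbpos : 0 < b := by positivity
    have hfact : (n.choose k : ℝ) * k.factorial * (n-k).factorial = n.factorial := by
      exact_mod_cast congrArg Nat.cast (Nat.choose_mul_factorial_mul_factorial hkn')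
    have hM1 : Mseq (n-k) = ((n-k).factorial : ℝ) / a^2 := rfl
    have hM2 : Mseq (k+1) = ((k:ℝ)+1) * k.factorial / b^2 := by
      unfold Mseq
      rw [Nat.factorial_succ]
      push_cast
      ring
    have heq : (n.choose k : ℝ) * (Mseq (n - k) * Mseq (k + 1))
        = n.factorial * ((k:ℝ)+1) / (a^2 * b^2) := by
      rw [hM1, hM2, ← hfact]; field_simp
    have hkey : (1:ℝ)/(a^2*b^2) ≤ 2/((n:ℝ)+3)^2 * (1/a^2 + 1/b^2) := by
      rw [← hab, div_add_div _ _ (by positivity) (by positivity), div_mul_div_comm,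
        div_le_div_iff₀ (by positivity) (by positivity)]
      nlinarith [sq_nonneg (a-b), sq_nonneg (a+b), mul_pos hapos hbpos, sq_nonneg (a*b*(a-b)),
        sq_nonneg (a*b)]
    have hmul := mul_le_mul_of_nonneg_left hkey
      (show (0:ℝ) ≤ (n.factorial : ℝ) * ((k:ℝ)+1) by positivity)
    calc (n.choose k : ℝ) * (Mseq (n - k) * Mseq (k + 1))
        = (n.factorial : ℝ) * ((k:ℝ)+1) * (1/(a^2*b^2)) := by rw [heq]; ring
      _ ≤ (n.factorial : ℝ) * ((k:ℝ)+1) * (2/((n:ℝ)+3)^2 * (1/a^2+1/b^2)) := hmul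
      _ = 2 * n.factorial / ((n:ℝ) + 3)^2 * (((k:ℝ)+1)/a^2 + ((k:ℝ)+1)/b^2) := by ring
  have sumB : ∑ k ∈ Finset.range n, ((k:ℝ)+1)/((k:ℝ)+2)^2 ≤ (n:ℝ) := by
    calc ∑ k ∈ Finset.range n, ((k:ℝ)+1)/((k:ℝ)+2)^2
        ≤ ∑ k ∈ Finset.range n, (1:ℝ) := by
          refine Finset.sum_le_sum fun k _ => ?_
          rw [div_le_one (by positivity)]
          nlinarith [sq_nonneg ((k:ℝ)+1)]
      _ = (n:ℝ) := by simp
  have sumA : ∑ k ∈ Finset.range n, ((k:ℝ)+1)/(((n-k:ℕ):ℝ)+1)^2 ≤ (n:ℝ) := by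
    have htel : ∑ k ∈ Finset.range n, (F (k+1) - F k) = F n - F 0 :=
      Finset.sum_range_sub F n
    have hterm : ∀ k ∈ Finset.range n,
        ((k:ℝ)+1)/(((n-k:ℕ):ℝ)+1)^2 ≤ (n:ℝ) * (F (k+1) - F k) := by
      intro k hk
      have hkn : k < n := Finset.mem_range.mp hk
      set m : ℕ := n - k with hm
      have hm1 : 1 ≤ m := by omega
      have hms : n - (k+1) = m - 1 := by omega
      have hcast : ((m-1:ℕ):ℝ) + 1 = (m:ℝ) := by
        rw [Nat.cast_sub hm1]; push_cast; ring
      have hmpos : (0:ℝ) < (m:ℝ) := by exact_mod_cast hm1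
      have hFd : F (k+1) - F k = 1/((m:ℝ)*((m:ℝ)+1)) := by
        simp only [hF, hms, ← hm, hcast]
        field_simp
        ring
      rw [hFd]
      have h1 : ((k:ℝ)+1) ≤ (n:ℝ) := by exact_mod_cast hkn
      have h2 : (m:ℝ)*((m:ℝ)+1) ≤ ((m:ℝ)+1)^2 := by nlinarith
      calc ((k:ℝ)+1)/((m:ℝ)+1)^2 ≤ (n:ℝ)/((m:ℝ)*((m:ℝ)+1)) :=
            div_le_div₀ (by positivity) h1 (by positivity) h2
        _ = (n:ℝ) * (1/((m:ℝ)*((m:ℝ)+1))) := by ring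
    calc ∑ k ∈ Finset.range n, ((k:ℝ)+1)/(((n-k:ℕ):ℝ)+1)^2
        ≤ ∑ k ∈ Finset.range n, (n:ℝ) * (F (k+1) - F k) := Finset.sum_le_sum hterm
      _ = (n:ℝ) * (F n - F 0) := by rw [← Finset.mul_sum, htel]
      _ ≤ (n:ℝ) * 1 := by
          refine mul_le_mul_of_nonneg_left ?_ (Nat.cast_nonneg n)
          have h3 : F n = 1 := by simp [hF]
          rw [h3]
          have h4 : 0 ≤ F 0 := by positivity
          linarith
      _ = (n:ℝ) := by ring
  calc ∑ k ∈ Finset.range n, (n.choose k : ℝ) * (Mseq (n - k) * Mseq (k + 1))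
      ≤ ∑ k ∈ Finset.range n, 2 * n.factorial / ((n:ℝ) + 3)^2 *
          (((k:ℝ)+1)/(((n-k:ℕ):ℝ)+1)^2 + ((k:ℝ)+1)/((k:ℝ)+2)^2) :=
        Finset.sum_le_sum hstep
    _ = 2 * n.factorial / ((n:ℝ) + 3)^2 *
          ((∑ k ∈ Finset.range n, ((k:ℝ)+1)/(((n-k:ℕ):ℝ)+1)^2)
            + ∑ k ∈ Finset.range n, ((k:ℝ)+1)/((k:ℝ)+2)^2) := by
        rw [← Finset.mul_sum, Finset.sum_add_distrib]
    _ ≤ 2 * n.factorial / ((n:ℝ) + 3)^2 * ((n:ℝ) + (n:ℝ)) := by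
        refine mul_le_mul_of_nonneg_left (by linarith) (by positivity)
    _ = 4 * n * ((n.factorial:ℝ) / ((n:ℝ)+3)^2) := by ring
    _ ≤ 4 * n * ((n.factorial:ℝ) / ((n:ℝ)+1)^2) := by
        refine mul_le_mul_of_nonneg_left ?_ (by positivity)
        refine div_le_div_of_nonneg_left (by positivity) (by positivity) (by nlinarith)
    _ = 4 * n * Mseq n := rfl

/-- For every dimension `d` there is `C > 0` such that for every multi-index
`α ∈ ℕ^d`, `∑_{β < α} binom(α,β) M_{|α-β|} M_{|β|+1} ≤ C |α| M_{|α|}`. -/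
theorem stmt0 (d : ℕ) :
    ∃ C : ℝ, 0 < C ∧ ∀ α : Fin d → ℕ,
      ∑ β ∈ (Finset.Iic α).erase α,
          ((∏ i, (α i).choose (β i) : ℕ) : ℝ) * Mseq (∑ i, (α i - β i)) * Mseq ((∑ i, β i) + 1)
        ≤ C * (∑ i, α i : ℕ) * Mseq (∑ i, α i) := by
  refine ⟨4, by norm_num, fun α => ?_⟩
  set n := ∑ i, α i with hn
  set s := (Finset.Iic α).erase α with hs
  have hsle : ∀ β ∈ s, ∀ i, β i ≤ α i := fun β hβ =>
    Finset.mem_Iic.mp (Finset.mem_of_mem_erase hβ)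
  have hslt : ∀ β ∈ s, (∑ i, β i) < n := by
    intro β hβ
    have hle := hsle β hβ
    have hne : β ≠ α := Finset.ne_of_mem_erase hβ
    refine Finset.sum_lt_sum (fun i _ => hle i) ?_
    by_contra h
    push_neg at h
    exact hne (funext fun i => le_antisymm (hle i) (h i (Finset.mem_univ i)))
  have hrw : ∀ β ∈ s,
      ((∏ i, (α i).choose (β i) : ℕ) : ℝ) * Mseq (∑ i, (α i - β i)) * Mseq ((∑ i, β i) + 1)
      = ((∏ i, (α i).choose (β i) : ℕ) : ℝ)
          * (Mseq (n - ∑ i, β i) * Mseq ((∑ i, β i) + 1)) := by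
    intro β hβ
    have h1 : ∑ i, (α i - β i) = n - ∑ i, β i :=
      Finset.sum_tsub_distrib _ (fun i _ => hsle β hβ i)
    rw [h1, mul_assoc]
  rw [Finset.sum_congr rfl hrw]
  rw [← Finset.sum_fiberwise_of_maps_to
    (g := fun β : Fin d → ℕ => ∑ i, β i) (t := Finset.range n)
    (fun β hβ => Finset.mem_range.mpr (hslt β hβ))]
  have hinner : ∀ k ∈ Finset.range n,
      (∑ β ∈ s with (∑ i, β i) = k,
        ((∏ i, (α i).choose (β i) : ℕ) : ℝ)
          * (Mseq (n - ∑ i, β i) * Mseq ((∑ i, β i) + 1)))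
      ≤ (n.choose k : ℝ) * (Mseq (n - k) * Mseq (k + 1)) := by
    intro k hk
    have hcongr : ∀ β ∈ s.filter (fun β => (∑ i, β i) = k),
        ((∏ i, (α i).choose (β i) : ℕ) : ℝ)
          * (Mseq (n - ∑ i, β i) * Mseq ((∑ i, β i) + 1))
        = ((∏ i, (α i).choose (β i) : ℕ) : ℝ) * (Mseq (n - k) * Mseq (k + 1)) := by
      intro β hβ
      rw [(Finset.mem_filter.mp hβ).2]
    rw [Finset.sum_congr rfl hcongr, ← Finset.sum_mul]
    refine mul_le_mul_of_nonneg_right ?_ (mul_nonneg (Mseq_nonneg _) (Mseq_nonneg _))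
    rw [← Nat.cast_sum]
    rw [Nat.cast_le]
    rw [← vand d α k]
    refine Finset.sum_le_sum_of_subset ?_
    intro β hβ
    have hβ' := Finset.mem_filter.mp hβ
    refine Finset.mem_filter.mpr ⟨?_, hβ'.2⟩
    exact Fintype.mem_piFinset.mpr fun i =>
      Finset.mem_range.mpr (Nat.lt_succ_of_le (hsle β hβ'.1 i))
  calc ∑ k ∈ Finset.range n, ∑ β ∈ s with (∑ i, β i) = k,
        ((∏ i, (α i).choose (β i) : ℕ) : ℝ)
          * (Mseq (n - ∑ i, β i) * Mseq ((∑ i, β i) + 1))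
      ≤ ∑ k ∈ Finset.range n, (n.choose k : ℝ) * (Mseq (n - k) * Mseq (k + 1)) :=
        Finset.sum_le_sum hinner
    _ ≤ 4 * n * Mseq n := keybound n
    _ = 4 * (n : ℕ) * Mseq n := by norm_num
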